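/- Let Λ ∈ (0, ∞), N ∈ ℕ, φ : (0, Λ] → ℂ absolutely integrable, and a_0, …, a_N ∈ ℂ with φ(x) − Σ_{k=0}^{N} a_k x^k = O(x^{N+1}) as x → 0⁺. Define G(λ) := ∫_0^Λ x^λ (φ(x) − Σ_{k=0}^{N} a_k x^k) dx + Σ_{k=0}^{N} a_k Λ^{λ+k+1}/(λ+k+1). Then G is analytic on the set {λ ∈ ℂ : Re λ > −2−N} \ {−1, −2, …, −(N+1)}, and G(λ) = I_λ := ∫_0^Λ x^λ φ(x) dx whenever Re λ > −1. -/

import Mathlib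

open MeasureTheory Complex Filter

/-- The function
`G(λ) = ∫_0^Λ x^λ (φ(x) − ∑_{k=0}^N a_k x^k) dx + ∑_{k=0}^N a_k Λ^{λ+k+1}/(λ+k+1)`
is analytic on `{Re λ > −2−N} \ {−1, …, −(N+1)}` and coincides with
`I_λ = ∫_0^Λ x^λ φ(x) dx` for `Re λ > −1`. -/
theorem stmt1 (Λ : ℝ) (hΛ : 0 < Λ) (N : ℕ) (φ : ℝ → ℂ) (a : ℕ → ℂ)
    (hφ : IntegrableOn φ (Set.Ioc 0 Λ))
    (hasymp : (fun x : ℝ => φ x - ∑ k ∈ Finset.range (N + 1), a k * (x : ℂ) ^ k)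
      =O[nhdsWithin 0 (Set.Ioi 0)] fun x : ℝ => x ^ (N + 1))
    (G : ℂ → ℂ)
    (hG : ∀ l : ℂ, G l =
      (∫ x in Set.Ioc (0 : ℝ) Λ,
          (x : ℂ) ^ l * (φ x - ∑ k ∈ Finset.range (N + 1), a k * (x : ℂ) ^ k))
        + ∑ k ∈ Finset.range (N + 1),
            a k * (Λ : ℂ) ^ (l + (k : ℂ) + 1) / (l + (k : ℂ) + 1)) :
    AnalyticOnNhd ℂ G
      ({l : ℂ | (-2 - (N : ℝ)) < l.re} \
        {l : ℂ | ∃ k ∈ Finset.range (N + 1), l = -((k : ℂ) + 1)}) ∧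
    ∀ l : ℂ, -1 < l.re →
      G l = ∫ x in Set.Ioc (0 : ℝ) Λ, (x : ℂ) ^ l * φ x := by
  set ψ : ℝ → ℂ := fun x => φ x - ∑ k ∈ Finset.range (N + 1), a k * (x : ℂ) ^ k with hψdef
  have hPc : Continuous (fun x : ℝ => ∑ k ∈ Finset.range (N + 1), a k * (x : ℂ) ^ k) :=
    continuous_finset_sum _ fun k _ => continuous_const.mul (Complex.continuous_ofReal.pow k)
  have hψint : IntegrableOn ψ (Set.Ioc 0 Λ) := hφ.sub hPc.integrableOn_Ioc
  set ψt : ℝ → ℂ := (Set.Ioc 0 Λ).indicator ψ with hψt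
  -- local integrability
  have hloc : LocallyIntegrableOn ψt (Set.Ioi 0) :=
    ((hψint.integrable_indicator measurableSet_Ioc).locallyIntegrable).locallyIntegrableOn _
  -- big-O at top
  have htop : ∀ c : ℝ, ψt =O[atTop] (· ^ (-c)) := by
    intro c
    have h0 : ψt =ᶠ[atTop] (fun _ => (0 : ℂ)) := by
      filter_upwards [eventually_gt_atTop Λ] with x hx
      exact Set.indicator_of_notMem (fun hmem => absurd hmem.2 (not_le.mpr hx)) _
    exact h0.trans_isBigO (Asymptotics.isBigO_zero _ _)
  -- big-O at 0
  have hbot : ψt =O[nhdsWithin 0 (Set.Ioi 0)] (· ^ (-(-((N : ℝ) + 1)))) := by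
    refine hasymp.congr' ?_ ?_
    · filter_upwards [Ioc_mem_nhdsGT_of_mem (Set.mem_Ico.mpr ⟨le_refl (0:ℝ), hΛ⟩)] with x hx
      exact (Set.indicator_of_mem hx _).symm
    · filter_upwards with x
      rw [neg_neg, show ((N : ℝ) + 1) = ((N + 1 : ℕ) : ℝ) by push_cast; ring,
        Real.rpow_natCast]
  -- integrability of x^l ψ on Ioc
  have hint : ∀ l : ℂ, (-2 - (N : ℝ)) < l.re →
      IntegrableOn (fun x : ℝ => (x : ℂ) ^ l * ψ x) (Set.Ioc 0 Λ) := by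
    intro l hl
    have hme : MellinConvergent ψt (l + 1) := by
      refine mellinConvergent_of_isBigO_rpow (a := l.re + 2) (b := -((N:ℝ)+1))
        hloc (htop _) ?_ hbot ?_
      · simp only [Complex.add_re, Complex.one_re]; linarith
      · simp only [Complex.add_re, Complex.one_re]; linarith
    have h2 : IntegrableOn (fun x : ℝ => (x : ℂ) ^ l * ψt x) (Set.Ioc 0 Λ) := by
      have h3 : IntegrableOn (fun t : ℝ => (t : ℂ) ^ (l + 1 - 1) • ψt t) (Set.Ioc 0 Λ) :=
        hme.mono_set Set.Ioc_subset_Ioi_self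
      simpa only [add_sub_cancel_right, smul_eq_mul] using h3
    refine h2.congr_fun (fun x hx => ?_) measurableSet_Ioc
    simp only [hψt, Set.indicator_of_mem hx]
  -- integral identity with mellin
  have hmel : ∀ l : ℂ, (∫ x in Set.Ioc (0 : ℝ) Λ, (x : ℂ) ^ l * ψ x) = mellin ψt (l + 1) := by
    intro l
    rw [mellin]
    simp only [add_sub_cancel_right, smul_eq_mul]
    have : (fun x : ℝ => (x : ℂ) ^ l * ψt x)
        = (Set.Ioc 0 Λ).indicator (fun x : ℝ => (x : ℂ) ^ l * ψ x) := by
      funext x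
      by_cases hx : x ∈ Set.Ioc (0:ℝ) Λ
      · rw [hψt, Set.indicator_of_mem hx, Set.indicator_of_mem hx]
      · rw [hψt, Set.indicator_of_notMem hx, Set.indicator_of_notMem hx, mul_zero]
    rw [this, setIntegral_indicator measurableSet_Ioc,
      Set.inter_eq_self_of_subset_right Set.Ioc_subset_Ioi_self]
  constructor
  · -- analyticity
    have hGeq : G = fun l => mellin ψt (l + 1)
        + ∑ k ∈ Finset.range (N + 1), a k * (Λ : ℂ) ^ (l + (k : ℂ) + 1) / (l + (k : ℂ) + 1) := by
      funext l; rw [hG l, hmel l]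
    have hopen : IsOpen ({l : ℂ | (-2 - (N : ℝ)) < l.re} \
        {l : ℂ | ∃ k ∈ Finset.range (N + 1), l = -((k : ℂ) + 1)}) := by
      apply IsOpen.sdiff
      · exact isOpen_lt continuous_const Complex.continuous_re
      · have hsub : {l : ℂ | ∃ k ∈ Finset.range (N + 1), l = -((k : ℂ) + 1)}
            ⊆ (fun k : ℕ => -((k : ℂ) + 1)) '' ↑(Finset.range (N + 1)) := by
          rintro l ⟨k, hk, rfl⟩; exact ⟨k, hk, rfl⟩
        exact (((Finset.range (N + 1)).finite_toSet.image _).subset hsub).isClosed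
    refine DifferentiableOn.analyticOnNhd (fun l hl => DifferentiableAt.differentiableWithinAt ?_) hopen
    obtain ⟨hl1, hl2⟩ := hl
    rw [hGeq]
    apply DifferentiableAt.add
    · have hd : DifferentiableAt ℂ (mellin ψt) (l + 1) := by
        refine mellin_differentiableAt_of_isBigO_rpow (a := l.re + 2) (b := -((N:ℝ)+1))
          hloc (htop _) ?_ hbot ?_
        · simp only [Complex.add_re, Complex.one_re]; linarith
        · simp only [Complex.add_re, Complex.one_re]
          simp only [Set.mem_setOf_eq] at hl1; linarith
      have := hd.comp l ((differentiableAt_id (𝕜 := ℂ) (x := l)).add_const (1:ℂ)); exact this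
    · apply DifferentiableAt.fun_sum
      intro k hk
      have hne : l + (k : ℂ) + 1 ≠ 0 := by
        intro h
        apply hl2
        exact ⟨k, hk, by linear_combination h⟩
      have hd1 : DifferentiableAt ℂ (fun l : ℂ => l + (k : ℂ) + 1) l :=
        (differentiableAt_id.add_const _).add_const _
      exact ((differentiableAt_const (a k)).mul (hd1.const_cpow (Or.inl (by
        exact_mod_cast hΛ.ne')))).div hd1 hne
  · -- identity for re l > -1
    intro l hl
    have hlN : (-2 - (N : ℝ)) < l.re := by
      have : (0:ℝ) ≤ N := Nat.cast_nonneg N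
      linarith
    have hψl := hint l hlN
    -- each monomial term
    have hmono : ∀ k ∈ Finset.range (N + 1),
        IntegrableOn (fun x : ℝ => (x : ℂ) ^ l * (a k * (x : ℂ) ^ k)) (Set.Ioc 0 Λ) := by
      intro k _
      have h1 : IntegrableOn (fun x : ℝ => (x : ℂ) ^ (l + k)) (Set.Ioc 0 Λ) := by
        rw [← intervalIntegrable_iff_integrableOn_Ioc_of_le hΛ.le]
        apply intervalIntegral.intervalIntegrable_cpow'
        simp only [Complex.add_re, Complex.natCast_re]
        have : (0:ℝ) ≤ k := Nat.cast_nonneg k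
        linarith
      refine IntegrableOn.congr_fun (h1.const_mul (a k)) (fun x hx => ?_) measurableSet_Ioc
      have hx0 : (x : ℂ) ≠ 0 := by
        exact_mod_cast (ne_of_gt hx.1)
      rw [Complex.cpow_add _ _ hx0, Complex.cpow_natCast]
      ring
    have hsum : IntegrableOn
        (fun x : ℝ => ∑ k ∈ Finset.range (N + 1), (x : ℂ) ^ l * (a k * (x : ℂ) ^ k))
        (Set.Ioc 0 Λ) := integrable_finset_sum _ hmono
    have hφl : IntegrableOn (fun x : ℝ => (x : ℂ) ^ l * φ x) (Set.Ioc 0 Λ) := by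
      refine IntegrableOn.congr_fun (hψl.add hsum) (fun x _ => ?_) measurableSet_Ioc
      simp only [Pi.add_apply, hψdef]
      rw [← Finset.mul_sum]
      ring
    -- integral of each monomial
    have hval : ∀ k ∈ Finset.range (N + 1),
        (∫ x in Set.Ioc (0 : ℝ) Λ, (x : ℂ) ^ l * (a k * (x : ℂ) ^ k))
          = a k * (Λ : ℂ) ^ (l + (k : ℂ) + 1) / (l + (k : ℂ) + 1) := by
      intro k _
      have hre : -1 < (l + (k:ℂ)).re := by
        simp only [Complex.add_re, Complex.natCast_re]
        have : (0:ℝ) ≤ k := Nat.cast_nonneg k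
        linarith
      have step1 : (∫ x in Set.Ioc (0 : ℝ) Λ, (x : ℂ) ^ l * (a k * (x : ℂ) ^ k))
          = a k * ∫ x in Set.Ioc (0 : ℝ) Λ, (x : ℂ) ^ (l + k) := by
        rw [← integral_const_mul]
        refine setIntegral_congr_fun measurableSet_Ioc (fun x hx => ?_)
        have hx0 : (x : ℂ) ≠ 0 := by exact_mod_cast (ne_of_gt hx.1)
        rw [Complex.cpow_add _ _ hx0, Complex.cpow_natCast]
        ring
      have step2 : (∫ x in Set.Ioc (0 : ℝ) Λ, (x : ℂ) ^ (l + k))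
          = (Λ : ℂ) ^ (l + (k : ℂ) + 1) / (l + (k : ℂ) + 1) := by
        rw [← intervalIntegral.integral_of_le hΛ.le, integral_cpow (Or.inl hre)]
        have h0 : ((0 : ℝ) : ℂ) ^ (l + (k:ℂ) + 1) = 0 := by
          rw [Complex.ofReal_zero, Complex.zero_cpow]
          intro h
          have := congrArg Complex.re h
          simp only [Complex.add_re, Complex.one_re, Complex.zero_re,
            Complex.natCast_re] at this
          have hk0 : (0:ℝ) ≤ k := Nat.cast_nonneg k
          linarith
        rw [h0, sub_zero]
      rw [step1, step2, mul_div_assoc]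
    -- finish
    rw [hG l]
    have hsplit : (∫ x in Set.Ioc (0 : ℝ) Λ, (x : ℂ) ^ l * ψ x)
        = (∫ x in Set.Ioc (0 : ℝ) Λ, (x : ℂ) ^ l * φ x)
          - ∑ k ∈ Finset.range (N + 1),
              a k * (Λ : ℂ) ^ (l + (k : ℂ) + 1) / (l + (k : ℂ) + 1) := by
      have : (∫ x in Set.Ioc (0 : ℝ) Λ, (x : ℂ) ^ l * ψ x)
          = (∫ x in Set.Ioc (0 : ℝ) Λ, ((x : ℂ) ^ l * φ x
              - ∑ k ∈ Finset.range (N + 1), (x : ℂ) ^ l * (a k * (x : ℂ) ^ k))) := by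
        refine setIntegral_congr_fun measurableSet_Ioc (fun x _ => ?_)
        simp only [hψdef]
        rw [← Finset.mul_sum]
        ring
      rw [this, integral_sub hφl hsum, integral_finset_sum _ hmono]
      congr 1
      exact Finset.sum_congr rfl hval
    simp only [hψdef] at hsplit ⊢
    rw [hsplit]
    ring
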